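/- Suppose A_k ∈ 𝒜_O for every k ≥ 0, the output matrices and noise covariances satisfy the standing assumptions, and Γ_{0|0} is symmetric positive definite. Then for every k with 0 ≤ k < max{1, n−2}, the Kalman covariance recursion satisfies 0 < c̃_1(Γ_{0|0})·I ≤ Γ_{k|k}^{−1} ≤ c̃_2(Γ_{0|0})·I, where c̃_1(M) = (2(2n−5)·‖M‖ + (2(n−3)²−1)·q_2)^{−1} if n ≥ 4 and c̃_1(M) = ‖M‖^{−1} if 2 ≤ n < 4, and c̃_2(M) = max{ λ_min(M)^{−1}, q_1^{−1} + r_1^{−1} } (‖·‖ is the spectral norm). -/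

import Mathlib

open Matrix Filter Finset

noncomputable section

/-- Loewner strict order `A < B`. -/
def loewnerLT {m : Type*} [Fintype m] (A B : Matrix m m ℝ) : Prop := (B - A).PosDef

/-- Loewner order `A ≤ B`. -/
def loewnerLE {m : Type*} [Fintype m] (A B : Matrix m m ℝ) : Prop := (B - A).PosSemidef

/-- smallest (real) eigenvalue of a matrix -/
def lamMin {N : ℕ} (M : Matrix (Fin N) (Fin N) ℝ) : ℝ :=
  sInf {t : ℝ | ∃ v : Fin N → ℝ, v ≠ 0 ∧ M.mulVec v = t • v}

/-- largest (real) eigenvalue of a matrix -/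
def lamMax {N : ℕ} (M : Matrix (Fin N) (Fin N) ℝ) : ℝ :=
  sSup {t : ℝ | ∃ v : Fin N → ℝ, v ≠ 0 ∧ M.mulVec v = t • v}

/-- spectral norm (ℓ²-operator norm) of a square matrix -/
def matSpectralNorm {N : ℕ} (M : Matrix (Fin N) (Fin N) ℝ) : ℝ :=
  ‖Matrix.toEuclideanCLM (𝕜 := ℝ) M‖

/-- largest singular value -/
def sigmaMax {N : ℕ} (M : Matrix (Fin N) (Fin N) ℝ) : ℝ := matSpectralNorm M

/-- maximum absolute row-sum matrix norm -/
def rowSumNorm {m n : ℕ} (M : Matrix (Fin m) (Fin n) ℝ) : ℝ :=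
  ⨆ i : Fin m, ∑ j, |M i j|

/-- Euclidean norm of a vector -/
def euclNorm {N : ℕ} (v : Fin N → ℝ) : ℝ := Real.sqrt (∑ j, (v j) ^ 2)

/-- the free-flow mode matrix A_FF -/
def matAFF (N : ℕ) (θv : ℝ) : Matrix (Fin N) (Fin N) ℝ :=
  Matrix.of fun i j =>
    if (i : ℕ) = 0 ∧ (j : ℕ) = 0 then 1
    else if i = j then 1 - θv
    else if (i : ℕ) = (j : ℕ) + 1 then θv
    else 0

/-- the congestion mode matrix A_CC -/
def matACC (N : ℕ) (θw : ℝ) : Matrix (Fin N) (Fin N) ℝ :=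
  Matrix.of fun i j =>
    if (i : ℕ) = N - 1 ∧ (j : ℕ) = N - 1 then 1
    else if i = j then 1 - θw
    else if (j : ℕ) = (i : ℕ) + 1 then θw
    else 0

/-- the congestion–freeflow mode matrix A_CF^s = diag(Δ_s, Θ_{N−s}) -/
def matACF (N s : ℕ) (θv θw : ℝ) : Matrix (Fin N) (Fin N) ℝ :=
  Matrix.of fun i j =>
    if (i : ℕ) < s ∧ (j : ℕ) < s then
      (if i = j then 1 - θw else if (j : ℕ) = (i : ℕ) + 1 then θw else 0)
    else if s ≤ (i : ℕ) ∧ s ≤ (j : ℕ) then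
      (if i = j then 1 - θv else if (i : ℕ) = (j : ℕ) + 1 then θv else 0)
    else 0

/-- set of observable-mode state transition matrices 𝒜_O -/
def setAO (N : ℕ) (θv θw : ℝ) : Set (Matrix (Fin N) (Fin N) ℝ) :=
  {matAFF N θv, matACC N θw} ∪ {M | ∃ s, 1 ≤ s ∧ s ≤ N - 1 ∧ M = matACF N s θv θw}

/-- boundary output matrix H_b, rows e_1ᵀ and e_nᵀ -/
def matHb (N : ℕ) : Matrix (Fin 2) (Fin N) ℝ :=
  Matrix.of fun i j =>
    if (i : ℕ) = 0 ∧ (j : ℕ) = 0 then 1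
    else if (i : ℕ) = 1 ∧ (j : ℕ) = N - 1 then 1
    else 0

/-- standing assumption on output matrices: pairwise distinct standard basis rows,
including e_1ᵀ and e_nᵀ -/
def standingH {mk N : ℕ} (H : Matrix (Fin mk) (Fin N) ℝ) : Prop :=
  (∀ p : Fin mk, ∃ l : Fin N, H p = fun j => if j = l then 1 else 0) ∧
  (∀ p q : Fin mk, H p = H q → p = q) ∧
  (∃ p : Fin mk, H p = fun j : Fin N => if (j : ℕ) = 0 then 1 else 0) ∧
  (∃ p : Fin mk, H p = fun j : Fin N => if (j : ℕ) = N - 1 then 1 else 0)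

/-- ascending product of inverses  M_lo⁻¹ · M_{lo+1}⁻¹ ⋯ M_hi⁻¹ -/
def prodInvAsc {N : ℕ} (M : ℕ → Matrix (Fin N) (Fin N) ℝ) (lo hi : ℕ) :
    Matrix (Fin N) (Fin N) ℝ :=
  ((List.range (hi + 1 - lo)).map (fun t => (M (lo + t))⁻¹)).prod

/-- descending product  M_hi · M_{hi−1} ⋯ M_lo -/
def prodDesc {N : ℕ} (M : ℕ → Matrix (Fin N) (Fin N) ℝ) (hi lo : ℕ) :
    Matrix (Fin N) (Fin N) ℝ :=
  ((List.range (hi + 1 - lo)).map (fun t => M (hi - t))).prod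

/-- a_𝓘 -/
def aI (N : ℕ) (θv θw r2 : ℝ) : ℝ :=
  r2⁻¹ * sInf {t : ℝ | ∃ M : ℕ → Matrix (Fin N) (Fin N) ℝ,
    (∀ ι, 1 ≤ ι → ι ≤ max 1 (N - 2) → M ι ∈ setAO N θv θw) ∧
    t = lamMin ((matHb N)ᵀ * matHb N +
      ∑ ι ∈ Finset.Icc 1 (max 1 (N - 2)),
        (prodInvAsc M ι (max 1 (N - 2)))ᵀ * (matHb N)ᵀ * matHb N *
          prodInvAsc M ι (max 1 (N - 2)))}

/-- b_𝓘 -/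
def bI (N : ℕ) (θv θw r1 : ℝ) : ℝ :=
  r1⁻¹ * sSup {t : ℝ | ∃ M : ℕ → Matrix (Fin N) (Fin N) ℝ,
    (∀ ι, 1 ≤ ι → ι ≤ max 1 (N - 2) → M ι ∈ setAO N θv θw) ∧
    t = lamMax (1 +
      ∑ ι ∈ Finset.Icc 1 (max 1 (N - 2)),
        (prodInvAsc M ι (max 1 (N - 2)))ᵀ * prodInvAsc M ι (max 1 (N - 2)))}

/-- a_𝓒 -/
def aC (N : ℕ) (θv θw q1 : ℝ) : ℝ :=
  q1 * sInf {t : ℝ | ∃ M : ℕ → Matrix (Fin N) (Fin N) ℝ,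
    (∀ ι, 1 ≤ ι → ι ≤ max 1 (N - 2) → M ι ∈ setAO N θv θw) ∧
    t = lamMin (1 +
      ∑ ι ∈ Finset.Icc 1 (max 1 (N - 2) - 1),
        prodDesc M (max 1 (N - 2) - 1) ι * (prodDesc M (max 1 (N - 2) - 1) ι)ᵀ)}

/-- b_𝓒 -/
def bC (N : ℕ) (θv θw q2 : ℝ) : ℝ :=
  q2 * sSup {t : ℝ | ∃ M : ℕ → Matrix (Fin N) (Fin N) ℝ,
    (∀ ι, 1 ≤ ι → ι ≤ max 1 (N - 2) → M ι ∈ setAO N θv θw) ∧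
    t = lamMax (1 +
      ∑ ι ∈ Finset.Icc 1 (max 1 (N - 2) - 1),
        prodDesc M (max 1 (N - 2) - 1) ι * (prodDesc M (max 1 (N - 2) - 1) ι)ᵀ)}

/-- constant c₁ -/
def cLow (N : ℕ) (θv θw q1 q2 r1 r2 : ℝ) : ℝ :=
  min (aI N θv θw r2) (aC N θv θw q1) /
    (1 + min (aI N θv θw r2) (aC N θv θw q1) * max (bI N θv θw r1) (bC N θv θw q2))

/-- constant c₂ -/
def cHigh (N : ℕ) (θv θw q1 q2 r1 r2 : ℝ) : ℝ :=
  (1 + min (aI N θv θw r2) (aC N θv θw q1) * max (bI N θv θw r1) (bC N θv θw q2)) /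
    min (aI N θv θw r2) (aC N θv θw q1)


/-- the function `c̃₁` of Lemma 2 -/
def cTilde1 (N : ℕ) (q2 : ℝ) (M : Matrix (Fin N) (Fin N) ℝ) : ℝ :=
  if 4 ≤ N then
    (2 * ((2 * N - 5 : ℕ) : ℝ) * matSpectralNorm M +
      (2 * ((N - 3 : ℕ) : ℝ) ^ 2 - 1) * q2)⁻¹
  else (matSpectralNorm M)⁻¹

/-- the function `c̃₂` of Lemma 2 -/
def cTilde2 (N : ℕ) (q1 r1 : ℝ) (M : Matrix (Fin N) (Fin N) ℝ) : ℝ :=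
  max (lamMin M)⁻¹ (q1⁻¹ + r1⁻¹)

namespace KF
variable {N : ℕ}

variable {N : ℕ}

lemma psd_of_quad {M : Matrix (Fin N) (Fin N) ℝ} (hM : M.IsHermitian)
    (h : ∀ x, 0 ≤ x ⬝ᵥ M *ᵥ x) : M.PosSemidef :=
  Matrix.PosSemidef.of_dotProduct_mulVec_nonneg hM (fun x => by simpa using h x)

lemma quad_nonneg {M : Matrix (Fin N) (Fin N) ℝ} (hM : M.PosSemidef) (x : Fin N → ℝ) :
    0 ≤ x ⬝ᵥ M *ᵥ x := by simpa using hM.dotProduct_mulVec_nonneg x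

lemma psd_smul {M : Matrix (Fin N) (Fin N) ℝ} (hM : M.PosSemidef) {a : ℝ} (ha : 0 ≤ a) :
    (a • M).PosSemidef := by
  refine psd_of_quad ?_ (fun x => ?_)
  · unfold Matrix.IsHermitian
    rw [conjTranspose_smul, hM.1]
    simp
  · rw [smul_mulVec, dotProduct_smul]
    exact mul_nonneg ha (quad_nonneg hM x)

lemma psd_smul_one {a : ℝ} (ha : 0 ≤ a) : ((a • 1 : Matrix (Fin N) (Fin N) ℝ)).PosSemidef :=
  psd_smul Matrix.PosSemidef.one ha

lemma quad_smul_one (a : ℝ) (x : Fin N → ℝ) :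
    x ⬝ᵥ (a • 1 : Matrix (Fin N) (Fin N) ℝ) *ᵥ x = a * ∑ i, x i ^ 2 := by
  rw [smul_mulVec, one_mulVec, dotProduct_smul]
  simp [dotProduct, sq, mul_comm]

lemma psd_sub_iff_quad {M : Matrix (Fin N) (Fin N) ℝ} (hM : M.IsHermitian) (c : ℝ) :
    ((c • 1 - M : Matrix (Fin N) (Fin N) ℝ)).PosSemidef ↔
      ∀ x, x ⬝ᵥ M *ᵥ x ≤ c * ∑ i, x i ^ 2 := by
  constructor
  · intro h x
    have := quad_nonneg h x
    rw [sub_mulVec, dotProduct_sub, quad_smul_one] at this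
    linarith
  · intro h
    refine psd_of_quad ?_ (fun x => ?_)
    · unfold Matrix.IsHermitian at *
      rw [conjTranspose_sub, conjTranspose_smul, conjTranspose_one, hM]
      simp
    · rw [sub_mulVec, dotProduct_sub, quad_smul_one]
      linarith [h x]

lemma psd_quad_sub_iff {M : Matrix (Fin N) (Fin N) ℝ} (hM : M.IsHermitian) (c : ℝ) :
    ((M - c • 1 : Matrix (Fin N) (Fin N) ℝ)).PosSemidef ↔
      ∀ x, c * ∑ i, x i ^ 2 ≤ x ⬝ᵥ M *ᵥ x := by
  constructor
  · intro h x
    have := quad_nonneg h x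
    rw [sub_mulVec, dotProduct_sub, quad_smul_one] at this
    linarith
  · intro h
    refine psd_of_quad ?_ (fun x => ?_)
    · unfold Matrix.IsHermitian at *
      rw [conjTranspose_sub, conjTranspose_smul, conjTranspose_one, hM]
      simp
    · rw [sub_mulVec, dotProduct_sub, quad_smul_one]
      linarith [h x]



variable {N : ℕ}

lemma isUnit_det_of_posDef {M : Matrix (Fin N) (Fin N) ℝ} (hM : M.PosDef) : IsUnit M.det :=
  isUnit_iff_ne_zero.2 hM.det_pos.ne'

open scoped MatrixOrder in
/-- key conjugation computation: for `M` posdef, `S⁻¹ (b•1 + e•M) S⁻¹ = b•M⁻¹ + e•1`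
where `S` is the psd sqrt of `M`. -/
lemma inv_conj {M : Matrix (Fin N) (Fin N) ℝ} (hM : M.PosDef) (b e : ℝ) :
    ((CFC.sqrt M))⁻¹ * (b • (1 : Matrix (Fin N) (Fin N) ℝ) + e • M) * ((CFC.sqrt M))⁻¹
      = b • M⁻¹ + e • (1 : Matrix (Fin N) (Fin N) ℝ) := by
  set S := (CFC.sqrt M) with hS
  have hSS : S * S = M := CFC.sqrt_mul_sqrt_self M hM.posSemidef.nonneg
  have hdet : IsUnit S.det := by
    have : IsUnit (S.det * S.det) := by
      rw [← det_mul, hSS]; exact isUnit_det_of_posDef hM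
    exact isUnit_of_mul_isUnit_left this
  have h1 : S⁻¹ * S = 1 := nonsing_inv_mul S hdet
  have h2 : S * S⁻¹ = 1 := mul_nonsing_inv S hdet
  have hMinv : M⁻¹ = S⁻¹ * S⁻¹ := by rw [← hSS, Matrix.mul_inv_rev]
  have hMid : S⁻¹ * M * S⁻¹ = 1 := by
    rw [← hSS, ← Matrix.mul_assoc, Matrix.mul_assoc (S⁻¹ * S), h2, Matrix.mul_one, h1]
  rw [Matrix.mul_add, Matrix.add_mul, Matrix.mul_smul, Matrix.smul_mul, Matrix.mul_one,
    Matrix.mul_smul, Matrix.smul_mul, hMid, hMinv]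

open scoped MatrixOrder in
lemma psd_conj_inv_sqrt {M X : Matrix (Fin N) (Fin N) ℝ} (hM : M.PosDef) (hX : X.PosSemidef) :
    (((CFC.sqrt M))⁻¹ * X * ((CFC.sqrt M))⁻¹).PosSemidef := by
  have hh : (((CFC.sqrt M))⁻¹)ᴴ = ((CFC.sqrt M))⁻¹ :=
    ((CFC.sqrt_nonneg M).posSemidef.1).inv
  have h0 := hX.conjTranspose_mul_mul_same (((CFC.sqrt M))⁻¹)
  rwa [hh] at h0

/-- if `0 < c` and `M ≤ c•1` for posdef `M`, then `c⁻¹•1 ≤ M⁻¹`. -/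
lemma inv_ge_of_le_smul {M : Matrix (Fin N) (Fin N) ℝ} (hM : M.PosDef) {c : ℝ} (hc : 0 < c)
    (h : ((c • 1 - M : Matrix (Fin N) (Fin N) ℝ)).PosSemidef) :
    ((M⁻¹ - c⁻¹ • 1 : Matrix (Fin N) (Fin N) ℝ)).PosSemidef := by
  have hconj := psd_conj_inv_sqrt hM h
  have : (c • 1 - M : Matrix (Fin N) (Fin N) ℝ) = c • 1 + (-1 : ℝ) • M := by
    simp [sub_eq_add_neg]
  rw [this, inv_conj hM c (-1)] at hconj
  have := psd_smul hconj (le_of_lt (inv_pos.2 hc))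
  have heq : c⁻¹ • (c • M⁻¹ + (-1 : ℝ) • (1 : Matrix (Fin N) (Fin N) ℝ))
      = M⁻¹ - c⁻¹ • 1 := by
    rw [smul_add, smul_smul, smul_smul, inv_mul_cancel₀ hc.ne', one_smul]
    simp [sub_eq_add_neg]
  rwa [heq] at this

/-- if `0 < a` and `a•1 ≤ M` for posdef `M`, then `M⁻¹ ≤ a⁻¹•1`. -/
lemma inv_le_of_smul_le {M : Matrix (Fin N) (Fin N) ℝ} (hM : M.PosDef) {a : ℝ} (ha : 0 < a)
    (h : ((M - a • 1 : Matrix (Fin N) (Fin N) ℝ)).PosSemidef) :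
    ((a⁻¹ • 1 - M⁻¹ : Matrix (Fin N) (Fin N) ℝ)).PosSemidef := by
  have hconj := psd_conj_inv_sqrt hM h
  have : (M - a • 1 : Matrix (Fin N) (Fin N) ℝ) = (-a) • 1 + (1 : ℝ) • M := by
    simp [sub_eq_add_neg, add_comm, neg_smul]
  rw [this, inv_conj hM (-a) 1] at hconj
  have := psd_smul hconj (le_of_lt (inv_pos.2 ha))
  have heq : a⁻¹ • ((-a) • M⁻¹ + (1 : ℝ) • (1 : Matrix (Fin N) (Fin N) ℝ))
      = a⁻¹ • 1 - M⁻¹ := by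
    rw [smul_add, smul_smul, smul_smul]
    rw [show a⁻¹ * (-a) = -1 by field_simp]
    simp [sub_eq_add_neg, add_comm]
  rwa [heq] at this



variable {N : ℕ}

lemma sum_sq_pos {x : Fin N → ℝ} (hx : x ≠ 0) : 0 < ∑ i, x i ^ 2 := by
  rcases Function.ne_iff.1 hx with ⟨i, hi⟩
  have hi' : x i ≠ 0 := by simpa using hi
  have : 0 < x i ^ 2 := by positivity
  exact lt_of_lt_of_le this (Finset.single_le_sum (fun j _ => sq_nonneg (x j)) (mem_univ i))

lemma quad_le_spectralNorm (M : Matrix (Fin N) (Fin N) ℝ) (x : Fin N → ℝ) :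
    x ⬝ᵥ M *ᵥ x ≤ matSpectralNorm M * ∑ i, x i ^ 2 := by
  set T := Matrix.toEuclideanCLM (𝕜 := ℝ) M with hT
  set x' : EuclideanSpace ℝ (Fin N) := (WithLp.equiv 2 _).symm x with hx'
  have hTx : T x' = (WithLp.equiv 2 _).symm (M *ᵥ x) := Matrix.toEuclideanCLM_toLp M x
  have hnx : ‖x'‖ ^ 2 = ∑ i, x i ^ 2 := by
    rw [EuclideanSpace.norm_eq, Real.sq_sqrt (by positivity)]
    simp [hx', sq_abs]
  have hinner : (inner ℝ x' (T x') : ℝ) = x ⬝ᵥ M *ᵥ x := by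
    rw [hTx]
    simp [PiLp.inner_apply, RCLike.inner_apply, dotProduct, hx',
      mulVec]
    exact Finset.sum_congr rfl (fun i _ => mul_comm _ _)
  calc x ⬝ᵥ M *ᵥ x = (inner ℝ x' (T x') : ℝ) := hinner.symm
    _ ≤ ‖x'‖ * ‖T x'‖ := real_inner_le_norm x' (T x')
    _ ≤ ‖x'‖ * (‖T‖ * ‖x'‖) := by
        exact mul_le_mul_of_nonneg_left (T.le_opNorm x') (norm_nonneg x')
    _ = ‖T‖ * ‖x'‖ ^ 2 := by ring
    _ = matSpectralNorm M * ∑ i, x i ^ 2 := by rw [hnx, matSpectralNorm, hT]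

lemma spectralNorm_pos {M : Matrix (Fin N) (Fin N) ℝ} (hM : M.PosDef) (hN : 0 < N) :
    0 < matSpectralNorm M := by
  set x : Fin N → ℝ := Pi.single ⟨0, hN⟩ 1 with hx
  have hx0 : x ≠ 0 := by
    intro h
    have := congrFun h ⟨0, hN⟩
    simp [hx] at this
  have h1 : 0 < x ⬝ᵥ M *ᵥ x := by simpa using hM.dotProduct_mulVec_pos hx0
  have h2 := quad_le_spectralNorm M x
  nlinarith [sum_sq_pos hx0]

lemma lamMin_facts {M : Matrix (Fin N) (Fin N) ℝ} (hM : M.PosDef) (hN : 0 < N) :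
    0 < lamMin M ∧ ∀ x, lamMin M * ∑ i, x i ^ 2 ≤ x ⬝ᵥ M *ᵥ x := by
  have inst : Nonempty (Fin N) := ⟨⟨0, hN⟩⟩
  have hH := hM.isHermitian
  set lam := hH.eigenvalues with hlam
  set U : Matrix (Fin N) (Fin N) ℝ := (hH.eigenvectorUnitary : Matrix (Fin N) (Fin N) ℝ)
    with hUdef
  have hsu : star U * U = 1 := Unitary.coe_star_mul_self hH.eigenvectorUnitary
  have hus : U * star U = 1 := Unitary.coe_mul_star_self hH.eigenvectorUnitary
  have hspec : M = U * diagonal lam * star U := by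
    have := hH.spectral_theorem
    simpa [Function.comp] using this
  -- expansion of quadratic form
  have expand : ∀ x : Fin N → ℝ, x ⬝ᵥ M *ᵥ x = ∑ i, lam i * ((star U *ᵥ x) i) ^ 2 := by
    intro x
    conv_lhs => rw [hspec]
    rw [← mulVec_mulVec, ← mulVec_mulVec, dotProduct_mulVec]
    have hv : x ᵥ* U = star U *ᵥ x := by
      ext i
      simp [vecMul, mulVec, dotProduct, conjTranspose, mul_comm]
    rw [hv]
    simp [mulVec_diagonal, dotProduct]
    exact Finset.sum_congr rfl (fun i _ => by ring)
  have norm_pres : ∀ x : Fin N → ℝ, ∑ i, ((star U *ᵥ x) i) ^ 2 = ∑ i, x i ^ 2 := by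
    intro x
    have h1 : ∑ i, ((star U *ᵥ x) i) ^ 2 = (star U *ᵥ x) ⬝ᵥ (star U *ᵥ x) := by
      simp [dotProduct, sq]
    have h2 : ∑ i, x i ^ 2 = x ⬝ᵥ x := by simp [dotProduct, sq]
    rw [h1, h2, dotProduct_mulVec]
    have hT : (star U)ᵀ = U := by
      ext i j; simp [conjTranspose]
    have hv : (star U *ᵥ x) ᵥ* star U = x := by
      rw [← mulVec_transpose, hT, mulVec_mulVec, hus, one_mulVec]
    rw [hv]
  -- minimal eigenvalue
  obtain ⟨i0, hi0⟩ := Finite.exists_min lam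
  have hpos : ∀ i, 0 < lam i := fun i => hM.eigenvalues_pos i
  have hQB : ∀ x : Fin N → ℝ, lam i0 * ∑ i, x i ^ 2 ≤ x ⬝ᵥ M *ᵥ x := by
    intro x
    rw [expand x, ← norm_pres x, Finset.mul_sum]
    exact Finset.sum_le_sum (fun i _ =>
      mul_le_mul_of_nonneg_right (hi0 i) (sq_nonneg _))
  set E := {t : ℝ | ∃ v : Fin N → ℝ, v ≠ 0 ∧ M.mulVec v = t • v} with hE
  -- each eigenvalue is in E via columns of U
  have hMU : M * U = U * diagonal lam := by
    rw [hspec, Matrix.mul_assoc, Matrix.mul_assoc, hsu, Matrix.mul_one]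
  have hmem : lam i0 ∈ E := by
    refine ⟨fun i => U i i0, ?_, ?_⟩
    · intro h
      have hcol : ∀ i, U i i0 = 0 := fun i => congrFun h i
      have h11 : (star U * U) i0 i0 = 1 := by rw [hsu]; simp
      rw [Matrix.mul_apply] at h11
      simp [hcol] at h11
    · ext i
      have h1 : (M * U) i i0 = (U * diagonal lam) i i0 := by rw [hMU]
      rw [Matrix.mul_apply, Matrix.mul_apply] at h1
      simp only [mulVec, dotProduct, Pi.smul_apply, smul_eq_mul]
      rw [h1]
      simp [diagonal, mul_comm]
  have hlb : ∀ t ∈ E, lam i0 ≤ t := by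
    rintro t ⟨v, hv0, hv⟩
    have h1 := hQB v
    have h2 : v ⬝ᵥ M *ᵥ v = t * ∑ i, v i ^ 2 := by
      rw [hv]
      simp [dotProduct, Finset.mul_sum, sq]
      exact Finset.sum_congr rfl (fun i _ => by ring)
    rw [h2] at h1
    exact le_of_mul_le_mul_right h1 (sum_sq_pos hv0)
  have hbdd : BddBelow E := ⟨lam i0, hlb⟩
  have hne : E.Nonempty := ⟨lam i0, hmem⟩
  have h1 : lam i0 ≤ lamMin M := le_csInf hne hlb
  have h2 : lamMin M ≤ lam i0 := csInf_le hbdd hmem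
  refine ⟨lt_of_lt_of_le (hpos i0) h1, fun x => ?_⟩
  calc lamMin M * ∑ i, x i ^ 2 ≤ lam i0 * ∑ i, x i ^ 2 := by
        apply mul_le_mul_of_nonneg_right h2
        positivity
    _ ≤ x ⬝ᵥ M *ᵥ x := hQB x


variable {N : ℕ}

/-- generic tridiagonal matrix with row-indexed coefficients -/
def triMat (N : ℕ) (d l u : ℕ → ℝ) : Matrix (Fin N) (Fin N) ℝ :=
  Matrix.of fun i j =>
    if (i : ℕ) = (j : ℕ) then d i
    else if (i : ℕ) = (j : ℕ) + 1 then l i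
    else if (j : ℕ) = (i : ℕ) + 1 then u i
    else 0

lemma sum_ite_val_le {c : ℝ} (hc : 0 ≤ c) (m : ℕ) :
    ∑ i : Fin N, (if (i : ℕ) = m then c else 0) ≤ c := by
  by_cases h : m < N
  · have : ∀ i : Fin N, ((i : ℕ) = m) = (i = ⟨m, h⟩) := by
      intro i; simp [Fin.ext_iff]
    simp only [this]
    rw [Finset.sum_ite_eq' univ (⟨m, h⟩ : Fin N) (fun _ => c)]
    simp
  · have : ∀ i : Fin N, ((i : ℕ) = m) = False := by
      intro i
      simp only [eq_iff_iff, iff_false]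
      omega
    simp only [this]
    simp [hc]

lemma sum_ite_val_eq (c : ℝ) {m : ℕ} (h : m < N) :
    ∑ i : Fin N, (if (i : ℕ) = m then c else 0) = c := by
  have heq : ∀ i : Fin N, ((i : ℕ) = m) = (i = ⟨m, h⟩) := by
    intro i; simp [Fin.ext_iff]
  simp only [heq]
  rw [Finset.sum_ite_eq' univ (⟨m, h⟩ : Fin N) (fun _ => c)]
  simp

lemma triMat_nonneg {d l u : ℕ → ℝ} (hd : ∀ m, 0 ≤ d m) (hl : ∀ m, 0 ≤ l m)
    (hu : ∀ m, 0 ≤ u m) (i j : Fin N) : 0 ≤ triMat N d l u i j := by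
  unfold triMat
  simp only [Matrix.of_apply]
  split_ifs <;> first | exact hd _ | exact hl _ | exact hu _ | exact le_refl 0

lemma triMat_eq_sum (d l u : ℕ → ℝ) (i j : Fin N) :
    triMat N d l u i j =
      (if (i : ℕ) = (j : ℕ) then d i else 0) +
      (if (i : ℕ) = (j : ℕ) + 1 then l i else 0) +
      (if (j : ℕ) = (i : ℕ) + 1 then u i else 0) := by
  unfold triMat
  simp only [Matrix.of_apply]
  split_ifs <;> first | (exfalso; omega) | ring

lemma triMat_row_sum {d l u : ℕ → ℝ} (hd : ∀ m, 0 ≤ d m) (hl : ∀ m, 0 ≤ l m)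
    (hu : ∀ m, 0 ≤ u m) (i : Fin N) :
    ∑ j, triMat N d l u i j ≤
      d i + (if 1 ≤ (i : ℕ) then l i else 0) + (if (i : ℕ) + 1 < N then u i else 0) := by
  have h1 : ∀ j : Fin N, triMat N d l u i j =
      (if (j : ℕ) = (i : ℕ) then d (i : ℕ) else 0) +
      (if (j : ℕ) = (i : ℕ) - 1 ∧ 1 ≤ (i : ℕ) then l (i : ℕ) else 0) +
      (if (j : ℕ) = (i : ℕ) + 1 then u (i : ℕ) else 0) := by
    intro j
    rw [triMat_eq_sum]
    congr 2
    · congr 1; simp only [eq_iff_iff]; omega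
    · split_ifs <;> first | rfl | (exfalso; omega)
  simp only [h1]
  rw [Finset.sum_add_distrib, Finset.sum_add_distrib]
  have e1 : ∑ j : Fin N, (if (j : ℕ) = (i : ℕ) then d (i : ℕ) else 0) = d (i : ℕ) :=
    sum_ite_val_eq _ i.isLt
  have e2 : ∑ j : Fin N, (if (j : ℕ) = (i : ℕ) - 1 ∧ 1 ≤ (i : ℕ) then l (i : ℕ) else 0) ≤
      (if 1 ≤ (i : ℕ) then l (i : ℕ) else 0) := by
    by_cases h : 1 ≤ (i : ℕ)
    · simp only [h, and_true, if_pos]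
      exact sum_ite_val_le (hl _) _
    · simp only [h, and_false, if_false, if_neg h]
      simp
  have e3 : ∑ j : Fin N, (if (j : ℕ) = (i : ℕ) + 1 then u (i : ℕ) else 0) ≤
      (if (i : ℕ) + 1 < N then u (i : ℕ) else 0) := by
    by_cases h : (i : ℕ) + 1 < N
    · simp only [if_pos h]
      exact sum_ite_val_le (hu _) _
    · have heq : ∀ j : Fin N, ((j : ℕ) = (i : ℕ) + 1) = False := by
        intro j; simp only [eq_iff_iff, iff_false]; omega
      simp only [heq, if_neg h]
      simp
  linarith

lemma triMat_col_sum {d l u : ℕ → ℝ} (hd : ∀ m, 0 ≤ d m) (hl : ∀ m, 0 ≤ l m)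
    (hu : ∀ m, 0 ≤ u m) (j : Fin N) :
    ∑ i, triMat N d l u i j ≤ d j + l ((j : ℕ) + 1) + u ((j : ℕ) - 1) := by
  have h1 : ∀ i : Fin N, triMat N d l u i j ≤
      (if (i : ℕ) = (j : ℕ) then d (j : ℕ) else 0) +
      (if (i : ℕ) = (j : ℕ) + 1 then l ((j : ℕ) + 1) else 0) +
      (if (i : ℕ) = (j : ℕ) - 1 ∧ 1 ≤ (j : ℕ) then u ((j : ℕ) - 1) else 0) := by
    intro i
    rw [triMat_eq_sum]
    have c1 : (if (i : ℕ) = (j : ℕ) then d (i : ℕ) else 0) ≤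
        (if (i : ℕ) = (j : ℕ) then d (j : ℕ) else 0) := by
      split_ifs with h
      · rw [h]
      · exact le_refl 0
    have c2 : (if (i : ℕ) = (j : ℕ) + 1 then l (i : ℕ) else 0) ≤
        (if (i : ℕ) = (j : ℕ) + 1 then l ((j : ℕ) + 1) else 0) := by
      split_ifs with h
      · rw [h]
      · exact le_refl 0
    have c3 : (if (j : ℕ) = (i : ℕ) + 1 then u (i : ℕ) else 0) ≤
        (if (i : ℕ) = (j : ℕ) - 1 ∧ 1 ≤ (j : ℕ) then u ((j : ℕ) - 1) else 0) := by
      split_ifs with h h2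
      · rw [show (i : ℕ) = (j : ℕ) - 1 by omega]
      · exfalso; omega
      · exact hu _
      · exact le_refl 0
    linarith
  have h2 : ∑ i, triMat N d l u i j ≤ ∑ i : Fin N,
      ((if (i : ℕ) = (j : ℕ) then d (j : ℕ) else 0) +
      (if (i : ℕ) = (j : ℕ) + 1 then l ((j : ℕ) + 1) else 0) +
      (if (i : ℕ) = (j : ℕ) - 1 ∧ 1 ≤ (j : ℕ) then u ((j : ℕ) - 1) else 0)) :=
    Finset.sum_le_sum (fun i _ => h1 i)
  rw [Finset.sum_add_distrib, Finset.sum_add_distrib] at h2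
  have e1 : ∑ i : Fin N, (if (i : ℕ) = (j : ℕ) then d (j : ℕ) else 0) = d (j : ℕ) :=
    sum_ite_val_eq _ j.isLt
  have e2 : ∑ i : Fin N, (if (i : ℕ) = (j : ℕ) + 1 then l ((j : ℕ) + 1) else 0) ≤
      l ((j : ℕ) + 1) := sum_ite_val_le (hl _) _
  have e3 : ∑ i : Fin N, (if (i : ℕ) = (j : ℕ) - 1 ∧ 1 ≤ (j : ℕ) then u ((j : ℕ) - 1) else 0) ≤
      u ((j : ℕ) - 1) := by
    by_cases h : 1 ≤ (j : ℕ)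
    · simp only [h, and_true]
      exact sum_ite_val_le (hu _) _
    · simp only [h, and_false, if_false]
      simp [hu _]
  calc ∑ i, triMat N d l u i j ≤ _ := h2
    _ ≤ d (j : ℕ) + l ((j : ℕ) + 1) + u ((j : ℕ) - 1) := by rw [e1]; linarith

/-- decomposition of the mode matrices as tridiagonal matrices -/
lemma matAFF_eq_tri (θv : ℝ) :
    matAFF N θv = triMat N (fun m => if m = 0 then 1 else 1 - θv) (fun _ => θv) (fun _ => 0) := by
  ext i j
  unfold matAFF triMat
  simp only [Matrix.of_apply, Fin.ext_iff]
  split_ifs <;> first | (exfalso; omega) | ring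

lemma matACC_eq_tri (θw : ℝ) :
    matACC N θw = triMat N (fun m => if m = N - 1 then 1 else 1 - θw) (fun _ => 0)
      (fun _ => θw) := by
  ext i j
  unfold matACC triMat
  simp only [Matrix.of_apply, Fin.ext_iff]
  split_ifs <;> first | (exfalso; omega) | ring

lemma matACF_eq_tri (s : ℕ) (θv θw : ℝ) :
    matACF N s θv θw = triMat N (fun m => if m < s then 1 - θw else 1 - θv)
      (fun m => if s + 1 ≤ m then θv else 0) (fun m => if m + 1 < s then θw else 0) := by
  ext i j
  unfold matACF triMat
  simp only [Matrix.of_apply, Fin.ext_iff]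
  split_ifs <;> first | (exfalso; omega) | ring

/-- the key combinatorial facts about mode matrices -/
lemma mode_facts {θv θw : ℝ} (hv0 : 0 < θv) (hv1 : θv < 1) (hw0 : 0 < θw) (hw1 : θw < 1)
    (hN : 0 < N) {A : Matrix (Fin N) (Fin N) ℝ} (hA : A ∈ setAO N θv θw) :
    (∀ i j, 0 ≤ A i j) ∧ (∀ i, ∑ j, A i j ≤ 1) ∧
      ∃ k₀ : Fin N, (∀ j, j ≠ k₀ → ∑ i, A i j ≤ 1) ∧ (∑ i, A i k₀ ≤ 2) := by
  rcases hA with (hA | hA) | ⟨s, hs1, hs2, hA⟩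
  · -- matAFF
    subst hA
    rw [matAFF_eq_tri]
    have hd : ∀ m, 0 ≤ (fun m => if m = 0 then 1 else 1 - θv) m := by
      intro m; dsimp; split_ifs <;> linarith
    have hl : ∀ m : ℕ, 0 ≤ (fun _ : ℕ => θv) m := fun _ => hv0.le
    have hu : ∀ m : ℕ, 0 ≤ (fun _ : ℕ => (0:ℝ)) m := fun _ => le_refl 0
    refine ⟨triMat_nonneg hd hl hu, fun i => ?_, ⟨0, hN⟩, fun j hj => ?_, ?_⟩
    · have := triMat_row_sum (N := N) hd hl hu i
      refine this.trans ?_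
      split_ifs <;> first | (exfalso; omega) | linarith
    · have := triMat_col_sum (N := N) hd hl hu j
      refine this.trans ?_
      have hj0 : (j : ℕ) ≠ 0 := by
        simpa [Fin.ext_iff] using hj
      simp only [if_neg hj0]
      linarith
    · have := triMat_col_sum (N := N) hd hl hu ⟨0, hN⟩
      refine this.trans ?_
      dsimp only
      split_ifs <;> linarith
  · -- matACC
    subst hA
    rw [matACC_eq_tri]
    have hd : ∀ m, 0 ≤ (fun m => if m = N - 1 then 1 else 1 - θw) m := by
      intro m; dsimp; split_ifs <;> linarith
    have hl : ∀ m : ℕ, 0 ≤ (fun _ : ℕ => (0:ℝ)) m := fun _ => le_refl 0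
    have hu : ∀ m : ℕ, 0 ≤ (fun _ : ℕ => θw) m := fun _ => hw0.le
    refine ⟨triMat_nonneg hd hl hu, fun i => ?_, ⟨N - 1, by omega⟩, fun j hj => ?_, ?_⟩
    · have := triMat_row_sum (N := N) hd hl hu i
      refine this.trans ?_
      split_ifs <;> first | (exfalso; omega) | linarith
    · have := triMat_col_sum (N := N) hd hl hu j
      refine this.trans ?_
      have hj0 : (j : ℕ) ≠ N - 1 := by
        simpa [Fin.ext_iff] using hj
      simp only [if_neg hj0]
      linarith
    · have := triMat_col_sum (N := N) hd hl hu ⟨N - 1, by omega⟩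
      refine this.trans ?_
      dsimp only
      split_ifs <;> linarith
  · -- matACF
    subst hA
    rw [matACF_eq_tri]
    have hd : ∀ m, 0 ≤ (fun m => if m < s then 1 - θw else 1 - θv) m := by
      intro m; dsimp; split_ifs <;> linarith
    have hl : ∀ m, 0 ≤ (fun m => if s + 1 ≤ m then θv else 0) m := by
      intro m; dsimp; split_ifs <;> linarith
    have hu : ∀ m, 0 ≤ (fun m => if m + 1 < s then θw else 0) m := by
      intro m; dsimp; split_ifs <;> linarith
    have hcol : ∀ j : Fin N, ∑ i, triMat N (fun m => if m < s then 1 - θw else 1 - θv)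
        (fun m => if s + 1 ≤ m then θv else 0) (fun m => if m + 1 < s then θw else 0) i j ≤ 1 := by
      intro j
      have := triMat_col_sum (N := N) hd hl hu j
      refine this.trans ?_
      rcases lt_or_ge (j : ℕ) s with h | h
      · rw [if_pos h, if_neg (by omega)]
        split_ifs <;> linarith
      · rw [if_neg (by omega), if_pos (by omega), if_neg (by omega)]
        linarith
    refine ⟨triMat_nonneg hd hl hu, fun i => ?_, ⟨0, hN⟩, fun j _ => hcol j, (hcol _).trans ?_⟩
    · have := triMat_row_sum (N := N) hd hl hu i
      refine this.trans ?_
      rcases lt_or_ge (i : ℕ) s with h | h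
      · rw [if_pos h]
        split_ifs <;> linarith
      · rw [if_neg (by omega)]
        split_ifs <;> linarith
    · linarith

/-- product bound predicate: nonneg entries, row sums ≤ 1, column sums ≤ 1+m -/
def good (N m : ℕ) (M : Matrix (Fin N) (Fin N) ℝ) : Prop :=
  (∀ i j, 0 ≤ M i j) ∧ (∀ i, ∑ j, M i j ≤ 1) ∧ (∀ j, ∑ i, M i j ≤ 1 + (m : ℝ))

lemma good_one : good N 0 (1 : Matrix (Fin N) (Fin N) ℝ) := by
  refine ⟨fun i j => ?_, fun i => ?_, fun j => ?_⟩
  · rw [Matrix.one_apply]; split_ifs <;> norm_num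
  · simp [Matrix.one_apply]
  · simp [Matrix.one_apply]

lemma good_mono {m m' : ℕ} {M : Matrix (Fin N) (Fin N) ℝ} (h : good N m M) (hm : m ≤ m') :
    good N m' M := by
  refine ⟨h.1, h.2.1, fun j => (h.2.2 j).trans ?_⟩
  have : (m : ℝ) ≤ (m' : ℝ) := Nat.cast_le.2 hm
  linarith

lemma good_step {θv θw : ℝ} (hv0 : 0 < θv) (hv1 : θv < 1) (hw0 : 0 < θw) (hw1 : θw < 1)
    (hN : 0 < N) {A M : Matrix (Fin N) (Fin N) ℝ} (hA : A ∈ setAO N θv θw) {m : ℕ}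
    (hM : good N m M) : good N (m + 1) (A * M) := by
  obtain ⟨hA0, hArow, k₀, hAcol, hAcol₀⟩ := mode_facts hv0 hv1 hw0 hw1 hN hA
  obtain ⟨hM0, hMrow, hMcol⟩ := hM
  have hent : ∀ k j, M k j ≤ 1 := by
    intro k j
    calc M k j ≤ ∑ j', M k j' :=
          Finset.single_le_sum (fun j' _ => hM0 k j') (mem_univ j)
      _ ≤ 1 := hMrow k
  refine ⟨fun i j => ?_, fun i => ?_, fun j => ?_⟩
  · rw [Matrix.mul_apply]
    exact Finset.sum_nonneg (fun k _ => mul_nonneg (hA0 i k) (hM0 k j))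
  · -- row sums
    have : ∑ j, (A * M) i j = ∑ k, A i k * ∑ j, M k j := by
      simp only [Matrix.mul_apply]
      rw [Finset.sum_comm]
      exact Finset.sum_congr rfl (fun k _ => by rw [Finset.mul_sum])
    rw [this]
    calc ∑ k, A i k * ∑ j, M k j ≤ ∑ k, A i k * 1 :=
          Finset.sum_le_sum (fun k _ => mul_le_mul_of_nonneg_left (hMrow k) (hA0 i k))
      _ = ∑ k, A i k := by simp
      _ ≤ 1 := hArow i
  · -- column sums
    have e1 : ∑ i, (A * M) i j = ∑ k, (∑ i, A i k) * M k j := by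
      simp only [Matrix.mul_apply]
      rw [Finset.sum_comm]
      exact Finset.sum_congr rfl (fun k _ => by rw [Finset.sum_mul])
    rw [e1]
    have e2 : ∀ k, (∑ i, A i k) * M k j ≤ M k j + (if k = k₀ then M k₀ j else 0) := by
      intro k
      by_cases hk : k = k₀
      · subst hk
        rw [if_pos rfl]
        have := mul_le_mul_of_nonneg_right hAcol₀ (hM0 k j)
        linarith
      · rw [if_neg hk]
        have := mul_le_mul_of_nonneg_right (hAcol k hk) (hM0 k j)
        linarith
    calc ∑ k, (∑ i, A i k) * M k j
        ≤ ∑ k, (M k j + (if k = k₀ then M k₀ j else 0)) := Finset.sum_le_sum (fun k _ => e2 k)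
      _ = (∑ k, M k j) + M k₀ j := by
          rw [Finset.sum_add_distrib, Finset.sum_ite_eq' univ k₀ (fun _ => M k₀ j)]
          simp
      _ ≤ (1 + (m : ℝ)) + 1 := add_le_add (hMcol j) (hent k₀ j)
      _ = 1 + ((m : ℕ) + 1 : ℕ) := by push_cast; ring

/-- partial products of the mode matrices: `prodPA A j k = A (k-1) * ⋯ * A j` -/
def prodPA {N : ℕ} (A : ℕ → Matrix (Fin N) (Fin N) ℝ) (j : ℕ) : ℕ → Matrix (Fin N) (Fin N) ℝ
  | 0 => 1
  | (k + 1) => if j ≤ k then A k * prodPA A j k else prodPA A j k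

lemma prodPA_of_le {A : ℕ → Matrix (Fin N) (Fin N) ℝ} {j k : ℕ} (h : k ≤ j) :
    prodPA A j k = 1 := by
  induction k with
  | zero => rfl
  | succ k ih =>
    rw [prodPA, if_neg (by omega)]
    exact ih (by omega)

lemma good_prodPA {θv θw : ℝ} (hv0 : 0 < θv) (hv1 : θv < 1) (hw0 : 0 < θw) (hw1 : θw < 1)
    (hN : 0 < N) {A : ℕ → Matrix (Fin N) (Fin N) ℝ} (hA : ∀ k, A k ∈ setAO N θv θw)
    (j k : ℕ) : good N (k - j) (prodPA A j k) := by
  induction k with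
  | zero => exact (by simpa [prodPA] using (good_one (N := N)) : good N (0 - j) (prodPA A j 0))
  | succ k ih =>
    rw [prodPA]
    by_cases h : j ≤ k
    · rw [if_pos h]
      have := good_step hv0 hv1 hw0 hw1 hN (hA k) ih
      have hkk : k - j + 1 = k + 1 - j := by omega
      rwa [hkk] at this
    · rw [if_neg h]
      exact good_mono ih (by omega)

/-- the operator-norm-type bound obtained from `good` -/
lemma good_quad {m : ℕ} {M : Matrix (Fin N) (Fin N) ℝ} (hM : good N m M) (x : Fin N → ℝ) :
    ∑ j, ((Mᵀ *ᵥ x) j) ^ 2 ≤ (1 + (m : ℝ)) * ∑ i, x i ^ 2 := by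
  obtain ⟨h0, hrow, hcol⟩ := hM
  have key : ∀ j : Fin N, ((Mᵀ *ᵥ x) j) ^ 2 ≤ (1 + (m : ℝ)) * ∑ i, M i j * x i ^ 2 := by
    intro j
    have he : (Mᵀ *ᵥ x) j = ∑ i, Real.sqrt (M i j) * (Real.sqrt (M i j) * x i) := by
      simp only [mulVec, dotProduct, transpose_apply]
      refine Finset.sum_congr rfl (fun i _ => ?_)
      rw [← mul_assoc, Real.mul_self_sqrt (h0 i j)]
    rw [he]
    calc (∑ i, Real.sqrt (M i j) * (Real.sqrt (M i j) * x i)) ^ 2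
        ≤ (∑ i, Real.sqrt (M i j) ^ 2) * ∑ i, (Real.sqrt (M i j) * x i) ^ 2 :=
          Finset.sum_mul_sq_le_sq_mul_sq univ _ _
      _ ≤ (1 + (m : ℝ)) * ∑ i, M i j * x i ^ 2 := by
          have e1 : ∑ i, Real.sqrt (M i j) ^ 2 = ∑ i, M i j :=
            Finset.sum_congr rfl (fun i _ => Real.sq_sqrt (h0 i j))
          have e2 : ∑ i, (Real.sqrt (M i j) * x i) ^ 2 = ∑ i, M i j * x i ^ 2 := by
            refine Finset.sum_congr rfl (fun i _ => ?_)
            rw [mul_pow, Real.sq_sqrt (h0 i j)]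
          rw [e1, e2]
          apply mul_le_mul_of_nonneg_right ((hcol j).trans_eq (by ring))
          exact Finset.sum_nonneg (fun i _ => mul_nonneg (h0 i j) (sq_nonneg _))
  calc ∑ j, ((Mᵀ *ᵥ x) j) ^ 2 ≤ ∑ j, (1 + (m : ℝ)) * ∑ i, M i j * x i ^ 2 :=
        Finset.sum_le_sum (fun j _ => key j)
    _ = (1 + (m : ℝ)) * ∑ i, (∑ j, M i j) * x i ^ 2 := by
        rw [← Finset.mul_sum, Finset.sum_comm]
        congr 1
        exact Finset.sum_congr rfl (fun i _ => by rw [Finset.sum_mul])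
    _ ≤ (1 + (m : ℝ)) * ∑ i, x i ^ 2 := by
        apply mul_le_mul_of_nonneg_left _ (by positivity)
        refine Finset.sum_le_sum (fun i _ => ?_)
        calc (∑ j, M i j) * x i ^ 2 ≤ 1 * x i ^ 2 :=
              mul_le_mul_of_nonneg_right (hrow i) (sq_nonneg _)
          _ = x i ^ 2 := one_mul _
    _ = (1 + (m : ℝ)) * ∑ i, x i ^ 2 := rfl


variable {N m : ℕ}

lemma kalman_step {Γp Γn : Matrix (Fin N) (Fin N) ℝ} {H : Matrix (Fin m) (Fin N) ℝ}
    {R : Matrix (Fin m) (Fin m) ℝ} (hΓp : Γp.PosDef) (hR : R.PosDef)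
    (K : Matrix (Fin N) (Fin m) ℝ)
    (hK : K = Γp * Hᵀ * (R + H * Γp * Hᵀ)⁻¹)
    (hΓn : Γn = Γp - K * H * Γp) :
    Γn.PosDef ∧ Γn⁻¹ = Γp⁻¹ + Hᵀ * R⁻¹ * H ∧ (Γp - Γn).PosSemidef := by
  have hct : ∀ {a b : ℕ} (B : Matrix (Fin a) (Fin b) ℝ), Bᴴ = Bᵀ := fun B =>
    conjTranspose_eq_transpose_of_trivial B
  set S := R + H * Γp * Hᵀ with hS
  have hHΓH : (H * Γp * Hᵀ).PosSemidef := by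
    have := hΓp.posSemidef.mul_mul_conjTranspose_same H
    rwa [hct] at this
  have hSpd : S.PosDef := hR.add_posSemidef hHΓH
  have hSdet : IsUnit S.det := isUnit_iff_ne_zero.2 hSpd.det_pos.ne'
  have hRdet : IsUnit R.det := isUnit_iff_ne_zero.2 hR.det_pos.ne'
  have hΓdet : IsUnit Γp.det := isUnit_iff_ne_zero.2 hΓp.det_pos.ne'
  set B := Γp * Hᵀ with hB
  have hBt : Bᵀ = H * Γp := by
    rw [hB, transpose_mul, transpose_transpose, ← hct Γp, hΓp.isHermitian.eq]
  set X := Γp⁻¹ + Hᵀ * R⁻¹ * H with hX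
  have hΓnB : Γn = Γp - B * S⁻¹ * Bᵀ := by
    rw [hΓn, hK, hBt, Matrix.mul_assoc (B * S⁻¹) H Γp]
  have e1 : B * S⁻¹ * Bᵀ * Γp⁻¹ = B * S⁻¹ * H := by
    rw [hBt, Matrix.mul_assoc (B * S⁻¹) (H * Γp) Γp⁻¹,
      Matrix.mul_nonsing_inv_cancel_right Γp H hΓdet]
  have e2 : Γp * (Hᵀ * R⁻¹ * H) = B * (R⁻¹ * H) := by
    rw [Matrix.mul_assoc Hᵀ R⁻¹ H, ← Matrix.mul_assoc Γp Hᵀ (R⁻¹ * H)]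
  have h4 : Bᵀ * Hᵀ = S - R := by
    rw [hBt, hS]; abel
  have e3 : B * S⁻¹ * Bᵀ * (Hᵀ * R⁻¹ * H) = B * (R⁻¹ * H) - B * S⁻¹ * H := by
    calc B * S⁻¹ * Bᵀ * (Hᵀ * R⁻¹ * H)
        = B * S⁻¹ * (Bᵀ * Hᵀ) * (R⁻¹ * H) := by
          rw [Matrix.mul_assoc Hᵀ R⁻¹ H, Matrix.mul_assoc (B * S⁻¹) Bᵀ (Hᵀ * (R⁻¹ * H)),
            ← Matrix.mul_assoc Bᵀ Hᵀ (R⁻¹ * H),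
            ← Matrix.mul_assoc (B * S⁻¹) (Bᵀ * Hᵀ) (R⁻¹ * H)]
      _ = B * S⁻¹ * (S - R) * (R⁻¹ * H) := by rw [h4]
      _ = B * (R⁻¹ * H) - B * S⁻¹ * H := by
          rw [Matrix.mul_sub (B * S⁻¹) S R, Matrix.sub_mul]
          congr 1
          · rw [Matrix.nonsing_inv_mul_cancel_right S B hSdet]
          · rw [Matrix.mul_assoc (B * S⁻¹) R (R⁻¹ * H),
              Matrix.mul_nonsing_inv_cancel_left R H hRdet]
  have hmain : Γn * X = 1 := by
    rw [hΓnB, hX, Matrix.sub_mul, Matrix.mul_add, Matrix.mul_add,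
      Matrix.mul_nonsing_inv Γp hΓdet, e1, e2, e3]
    abel
  have hXpd : X.PosDef := by
    have hRinv : (Hᵀ * R⁻¹ * H).PosSemidef := by
      have := hR.inv.posSemidef.conjTranspose_mul_mul_same H
      rwa [hct] at this
    exact hΓp.inv.add_posSemidef hRinv
  have hΓninv : Γn⁻¹ = X := Matrix.inv_eq_right_inv hmain
  have hΓneq : Γn = X⁻¹ := (Matrix.inv_eq_left_inv hmain).symm
  refine ⟨?_, hΓninv, ?_⟩
  · rw [hΓneq]; exact hXpd.inv
  · have hps : (B * S⁻¹ * Bᴴ).PosSemidef := hSpd.inv.posSemidef.mul_mul_conjTranspose_same B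
    rw [hct] at hps
    have heq : Γp - Γn = B * S⁻¹ * Bᵀ := by rw [hΓnB]; abel
    rwa [heq]


lemma posDef_smul_one {a : ℝ} (ha : 0 < a) : ((a • 1 : Matrix (Fin N) (Fin N) ℝ)).PosDef := by
  refine Matrix.PosDef.of_dotProduct_mulVec_pos ?_ ?_
  · unfold Matrix.IsHermitian
    rw [conjTranspose_smul, conjTranspose_one]
    simp
  · intro x hx
    have : x ⬝ᵥ (a • 1 : Matrix (Fin N) (Fin N) ℝ) *ᵥ x = a * ∑ i, x i ^ 2 := quad_smul_one a x
    simp only [star_trivial]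
    rw [this]
    exact mul_pos ha (sum_sq_pos hx)

lemma standingH_quad {mk : ℕ} {Hm : Matrix (Fin mk) (Fin N) ℝ}
    (h : (∀ p : Fin mk, ∃ l : Fin N, Hm p = fun j => if j = l then 1 else 0) ∧
         (∀ p q : Fin mk, Hm p = Hm q → p = q)) (x : Fin N → ℝ) :
    ∑ p, ((Hm *ᵥ x) p) ^ 2 ≤ ∑ j, x j ^ 2 := by
  obtain ⟨hrows, hinj⟩ := h
  choose l hl using hrows
  have hHx : ∀ p, (Hm *ᵥ x) p = x (l p) := by
    intro p
    simp only [mulVec, dotProduct]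
    have : ∀ j, Hm p j = if j = l p then 1 else 0 := fun j => congrFun (hl p) j
    simp only [this, ite_mul, one_mul, zero_mul]
    rw [Finset.sum_ite_eq' univ (l p) x]
    simp
  have linj : Function.Injective l := by
    intro p q hpq
    exact hinj p q (by rw [hl p, hl q, hpq])
  simp only [hHx]
  have e1 : ∑ p, x (l p) ^ 2 = ∑ j ∈ Finset.univ.image l, x j ^ 2 :=
    (Finset.sum_image (g := l) (s := Finset.univ) (f := fun j => x j ^ 2)
      (fun p _ q _ hh => linj hh)).symm
  rw [e1]
  exact Finset.sum_le_sum_of_subset_of_nonneg (Finset.subset_univ _)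
    (fun j _ _ => sq_nonneg (x j))

end KF

/-- Lemma 2 / `lem:GammaBound1`: initial-phase bounds
`0 < c̃₁(Γ₀₀)·I ≤ Γ_{k|k}⁻¹ ≤ c̃₂(Γ₀₀)·I` for `0 ≤ k < max{1, n−2}`. -/
theorem stmt2
    (n : ℕ) (hn : 2 ≤ n)
    (Δt Δx vm w : ℝ) (hΔt : 0 < Δt) (hΔx : 0 < Δx) (hvm : 0 < vm) (hw : 0 < w)
    (hv1 : vm * Δt / Δx < 1) (hw1 : w * Δt / Δx < 1)
    (q1 q2 r1 r2 : ℝ) (hq0 : 0 < q1) (hq : q1 < q2) (hr0 : 0 < r1) (hr : r1 < r2)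
    (A : ℕ → Matrix (Fin n) (Fin n) ℝ)
    (hA : ∀ k, A k ∈ setAO n (vm * Δt / Δx) (w * Δt / Δx))
    (md : ℕ → ℕ)
    (H : (k : ℕ) → Matrix (Fin (md k)) (Fin n) ℝ)
    (hH : ∀ k, standingH (H k))
    (Q : ℕ → Matrix (Fin n) (Fin n) ℝ)
    (R : (k : ℕ) → Matrix (Fin (md k)) (Fin (md k)) ℝ)
    (hQ : ∀ k, loewnerLT (q1 • 1) (Q k) ∧ loewnerLT (Q k) (q2 • 1))
    (hR : ∀ k, loewnerLT (r1 • 1) (R k) ∧ loewnerLT (R k) (r2 • 1))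
    (Γpost Γprior : ℕ → Matrix (Fin n) (Fin n) ℝ)
    (K : (k : ℕ) → Matrix (Fin n) (Fin (md k)) ℝ)
    (hΓ0 : (Γpost 0).PosDef)
    (hprior : ∀ k, Γprior (k + 1) = A k * Γpost k * (A k)ᵀ + Q k)
    (hK : ∀ k, K (k + 1) = Γprior (k + 1) * (H (k + 1))ᵀ *
        (R (k + 1) + H (k + 1) * Γprior (k + 1) * (H (k + 1))ᵀ)⁻¹)
    (hpost : ∀ k, Γpost (k + 1) = Γprior (k + 1) - K (k + 1) * H (k + 1) * Γprior (k + 1)) :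
    ∀ k, k < max 1 (n - 2) →
      0 < cTilde1 n q2 (Γpost 0) ∧
      loewnerLE ((cTilde1 n q2 (Γpost 0)) • 1) ((Γpost k)⁻¹) ∧
      loewnerLE ((Γpost k)⁻¹) ((cTilde2 n q1 r1 (Γpost 0)) • 1) := by
  have hct : ∀ {a b : ℕ} (B : Matrix (Fin a) (Fin b) ℝ), Bᴴ = Bᵀ := fun B =>
    conjTranspose_eq_transpose_of_trivial B
  have hn0 : 0 < n := by omega
  set θv := vm * Δt / Δx with hθv
  set θw := w * Δt / Δx with hθw
  have hv0 : 0 < θv := by rw [hθv]; positivity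
  have hw0 : 0 < θw := by rw [hθw]; positivity
  have hq2 : 0 < q2 := hq0.trans hq
  have hr2 : 0 < r2 := hr0.trans hr
  -- positive definiteness of the noise covariances
  have hQpd : ∀ k, (Q k).PosDef := by
    intro k
    have h1 : (Q k - q1 • 1).PosDef := (hQ k).1
    have h2 := KF.posDef_smul_one (N := n) hq0
    have := h1.add h2
    rwa [sub_add_cancel] at this
  have hRpd : ∀ k, (R k).PosDef := by
    intro k
    have h1 : (R k - r1 • 1).PosDef := (hR k).1
    have h2 := KF.posDef_smul_one (N := md k) hr0
    have := h1.add h2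
    rwa [sub_add_cancel] at this
  set c0 := matSpectralNorm (Γpost 0) with hc0def
  -- the main induction: positive definiteness plus quadratic upper bound
  have main : ∀ k, (Γpost k).PosDef ∧
      (∀ x : Fin n → ℝ, x ⬝ᵥ (Γpost k) *ᵥ x ≤
        c0 * (∑ i, (((KF.prodPA A 0 k)ᵀ *ᵥ x) i) ^ 2) +
        q2 * ∑ j ∈ Finset.range k, ∑ i, (((KF.prodPA A (j+1) k)ᵀ *ᵥ x) i) ^ 2) := by
    intro k
    induction k with
    | zero =>
      refine ⟨hΓ0, fun x => ?_⟩
      have h1 : KF.prodPA A 0 0 = 1 := rfl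
      rw [h1]
      simp only [Finset.range_zero, Finset.sum_empty, mul_zero, add_zero, transpose_one,
        one_mulVec]
      exact KF.quad_le_spectralNorm (Γpost 0) x
    | succ k ih =>
      have hpriorpd : (Γprior (k + 1)).PosDef := by
        rw [hprior k]
        have hconj : (A k * Γpost k * (A k)ᵀ).PosSemidef := by
          have := ih.1.posSemidef.mul_mul_conjTranspose_same (A k)
          rwa [hct] at this
        exact Matrix.PosDef.posSemidef_add hconj (hQpd k)
      obtain ⟨hpd, hinv, hdiff⟩ := KF.kalman_step hpriorpd (hRpd (k+1)) (K (k+1)) (hK k) (hpost k)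
      refine ⟨hpd, fun x => ?_⟩
      have h1 : x ⬝ᵥ (Γpost (k+1)) *ᵥ x ≤ x ⬝ᵥ (Γprior (k+1)) *ᵥ x := by
        have := KF.quad_nonneg hdiff x
        rw [sub_mulVec, dotProduct_sub] at this
        linarith
      have h2 : x ⬝ᵥ (Γprior (k+1)) *ᵥ x =
          ((A k)ᵀ *ᵥ x) ⬝ᵥ (Γpost k) *ᵥ ((A k)ᵀ *ᵥ x) + x ⬝ᵥ (Q k) *ᵥ x := by
        rw [hprior k, add_mulVec, dotProduct_add]
        congr 1
        rw [← mulVec_mulVec, ← mulVec_mulVec, dotProduct_mulVec, ← mulVec_transpose]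
      have h3 : x ⬝ᵥ (Q k) *ᵥ x ≤ q2 * ∑ i, x i ^ 2 := by
        have hlt : (q2 • 1 - Q k).PosDef := (hQ k).2
        exact ((KF.psd_sub_iff_quad (hQpd k).isHermitian q2).1 hlt.posSemidef) x
      set y := (A k)ᵀ *ᵥ x with hy
      have ihy := ih.2 y
      -- transport products one step
      have htrans : ∀ j, j ≤ k → (KF.prodPA A j k)ᵀ *ᵥ y = (KF.prodPA A j (k+1))ᵀ *ᵥ x := by
        intro j hj
        have : KF.prodPA A j (k+1) = A k * KF.prodPA A j k := by
          rw [KF.prodPA, if_pos hj]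
        rw [this, transpose_mul, ← mulVec_mulVec, hy]
      have hnew : KF.prodPA A (k+1) (k+1) = 1 := KF.prodPA_of_le le_rfl
      have hsum : ∑ j ∈ Finset.range (k+1), ∑ i, (((KF.prodPA A (j+1) (k+1))ᵀ *ᵥ x) i) ^ 2 =
          (∑ j ∈ Finset.range k, ∑ i, (((KF.prodPA A (j+1) k)ᵀ *ᵥ y) i) ^ 2) +
          ∑ i, x i ^ 2 := by
        rw [Finset.sum_range_succ]
        congr 1
        · exact Finset.sum_congr rfl (fun j hj => by
            rw [htrans (j+1) (by exact Nat.succ_le_of_lt (Finset.mem_range.1 hj))])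
        · rw [hnew]
          simp
      have h0trans : (∑ i, (((KF.prodPA A 0 k)ᵀ *ᵥ y) i) ^ 2) =
          ∑ i, (((KF.prodPA A 0 (k+1))ᵀ *ᵥ x) i) ^ 2 := by
        rw [htrans 0 (Nat.zero_le k)]
      calc x ⬝ᵥ (Γpost (k+1)) *ᵥ x ≤ x ⬝ᵥ (Γprior (k+1)) *ᵥ x := h1
        _ = y ⬝ᵥ (Γpost k) *ᵥ y + x ⬝ᵥ (Q k) *ᵥ x := h2
        _ ≤ (c0 * (∑ i, (((KF.prodPA A 0 k)ᵀ *ᵥ y) i) ^ 2) +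
              q2 * ∑ j ∈ Finset.range k, ∑ i, (((KF.prodPA A (j+1) k)ᵀ *ᵥ y) i) ^ 2) +
            q2 * ∑ i, x i ^ 2 := add_le_add ihy h3
        _ = c0 * (∑ i, (((KF.prodPA A 0 (k+1))ᵀ *ᵥ x) i) ^ 2) +
            q2 * ∑ j ∈ Finset.range (k+1), ∑ i, (((KF.prodPA A (j+1) (k+1))ᵀ *ᵥ x) i) ^ 2 := by
            rw [hsum, h0trans]
            ring
  -- prior matrices are positive definite and bounded below by q1
  have hpriorpd : ∀ k, (Γprior (k+1)).PosDef := by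
    intro k
    rw [hprior k]
    have hconj : (A k * Γpost k * (A k)ᵀ).PosSemidef := by
      have := (main k).1.posSemidef.mul_mul_conjTranspose_same (A k)
      rwa [hct] at this
    exact Matrix.PosDef.posSemidef_add hconj (hQpd k)
  have hpriorlb : ∀ k, (Γprior (k+1) - q1 • 1).PosSemidef := by
    intro k
    have hconj : (A k * Γpost k * (A k)ᵀ).PosSemidef := by
      have := (main k).1.posSemidef.mul_mul_conjTranspose_same (A k)
      rwa [hct] at this
    have heq : Γprior (k+1) - q1 • 1 = A k * Γpost k * (A k)ᵀ + (Q k - q1 • 1) := by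
      rw [hprior k]; abel
    rw [heq]
    exact hconj.add ((hQ k).1).posSemidef
  -- the final quantitative bound
  have hc0nonneg : 0 ≤ c0 := norm_nonneg _
  have hquadbound : ∀ k, k < max 1 (n - 2) →
      ∀ x : Fin n → ℝ, x ⬝ᵥ (Γpost k) *ᵥ x ≤
        (c0 * ((k : ℝ) + 1) + q2 * (k : ℝ) * (k : ℝ)) * ∑ i, x i ^ 2 := by
    intro k hk x
    have h1 := (main k).2 x
    have hgood0 := KF.good_quad (KF.good_prodPA hv0 hv1 hw0 hw1 hn0 hA 0 k) x
    have hb0 : (1 : ℝ) + ((k - 0 : ℕ) : ℝ) ≤ (k : ℝ) + 1 := by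
      push_cast
      simp [add_comm]
    have h2 : ∑ i, (((KF.prodPA A 0 k)ᵀ *ᵥ x) i) ^ 2 ≤ ((k : ℝ) + 1) * ∑ i, x i ^ 2 := by
      refine hgood0.trans ?_
      apply mul_le_mul_of_nonneg_right hb0
      positivity
    have h3 : ∀ j ∈ Finset.range k, ∑ i, (((KF.prodPA A (j+1) k)ᵀ *ᵥ x) i) ^ 2 ≤
        (k : ℝ) * ∑ i, x i ^ 2 := by
      intro j hj
      have hjk := Finset.mem_range.1 hj
      have hgood := KF.good_quad (KF.good_prodPA hv0 hv1 hw0 hw1 hn0 hA (j+1) k) x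
      refine hgood.trans ?_
      apply mul_le_mul_of_nonneg_right _ (by positivity)
      have : (1 : ℕ) + (k - (j+1)) ≤ k := by omega
      calc (1 : ℝ) + ((k - (j+1) : ℕ) : ℝ) = (((1 : ℕ) + (k - (j+1)) : ℕ) : ℝ) := by push_cast; ring
        _ ≤ (k : ℝ) := Nat.cast_le.2 this
    have h4 : ∑ j ∈ Finset.range k, ∑ i, (((KF.prodPA A (j+1) k)ᵀ *ᵥ x) i) ^ 2 ≤
        (k : ℝ) * ((k : ℝ) * ∑ i, x i ^ 2) := by
      calc ∑ j ∈ Finset.range k, ∑ i, (((KF.prodPA A (j+1) k)ᵀ *ᵥ x) i) ^ 2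
          ≤ ∑ _j ∈ Finset.range k, (k : ℝ) * ∑ i, x i ^ 2 := Finset.sum_le_sum h3
        _ = (k : ℝ) * ((k : ℝ) * ∑ i, x i ^ 2) := by
            rw [Finset.sum_const, Finset.card_range]
            push_cast
            ring
    calc x ⬝ᵥ (Γpost k) *ᵥ x ≤ _ := h1
      _ ≤ c0 * (((k : ℝ) + 1) * ∑ i, x i ^ 2) + q2 * ((k : ℝ) * ((k : ℝ) * ∑ i, x i ^ 2)) := by
          exact add_le_add (mul_le_mul_of_nonneg_left h2 hc0nonneg)
            (mul_le_mul_of_nonneg_left h4 hq2.le)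
      _ = (c0 * ((k : ℝ) + 1) + q2 * (k : ℝ) * (k : ℝ)) * ∑ i, x i ^ 2 := by ring
  -- the value of cTilde1 as an inverse
  set D : ℝ := if 4 ≤ n then
      2 * ((2 * n - 5 : ℕ) : ℝ) * c0 + (2 * ((n - 3 : ℕ) : ℝ) ^ 2 - 1) * q2
    else c0 with hD
  have hcT1 : cTilde1 n q2 (Γpost 0) = D⁻¹ := by
    rw [hD, cTilde1]
    split_ifs <;> rfl
  have hDpos : 0 < D := by
    rw [hD]
    split_ifs with h4
    · have hb1 : (1 : ℝ) ≤ ((n - 3 : ℕ) : ℝ) := by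
        have : 1 ≤ n - 3 := by omega
        exact_mod_cast this
      have ha0 : (0 : ℝ) ≤ ((2 * n - 5 : ℕ) : ℝ) := Nat.cast_nonneg _
      have hb2 : (1 : ℝ) ≤ ((n - 3 : ℕ) : ℝ) ^ 2 := by nlinarith
      have h1 : 0 < (2 * ((n - 3 : ℕ) : ℝ) ^ 2 - 1) * q2 := by nlinarith
      have h2 : (0:ℝ) ≤ 2 * ((2 * n - 5 : ℕ) : ℝ) * c0 := by positivity
      linarith
    · exact KF.spectralNorm_pos hΓ0 hn0
  have hDbound : ∀ k, k < max 1 (n - 2) →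
      c0 * ((k : ℝ) + 1) + q2 * (k : ℝ) * (k : ℝ) ≤ D := by
    intro k hk
    rw [hD]
    split_ifs with h4
    · have hk2 : k < n - 2 := by rwa [max_eq_right (by omega : 1 ≤ n - 2)] at hk
      have hkn : k ≤ n - 3 := by omega
      have hn1 : (k : ℝ) + 1 ≤ 2 * ((2 * n - 5 : ℕ) : ℝ) := by
        have h : k + 1 ≤ 2 * (2 * n - 5) := by omega
        calc (k : ℝ) + 1 = ((k + 1 : ℕ) : ℝ) := by push_cast; ring
          _ ≤ ((2 * (2 * n - 5) : ℕ) : ℝ) := Nat.cast_le.2 h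
          _ = 2 * ((2 * n - 5 : ℕ) : ℝ) := by push_cast; ring
      have hn2 : (k : ℝ) * (k : ℝ) ≤ 2 * ((n - 3 : ℕ) : ℝ) ^ 2 - 1 := by
        have h5 : k * k ≤ 2 * ((n - 3) * (n - 3)) - 1 := by
          have h6 : k * k ≤ (n - 3) * (n - 3) := Nat.mul_le_mul hkn hkn
          have h8 : 1 ≤ n - 3 := by omega
          have h7 : 1 ≤ (n - 3) * (n - 3) := Nat.mul_le_mul h8 h8
          omega
        calc (k : ℝ) * (k : ℝ) = ((k * k : ℕ) : ℝ) := by push_cast; ring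
          _ ≤ ((2 * ((n - 3) * (n - 3)) - 1 : ℕ) : ℝ) := Nat.cast_le.2 h5
          _ = 2 * ((n - 3 : ℕ) : ℝ) ^ 2 - 1 := by
              rw [Nat.cast_sub (by
                have h8 : 1 ≤ n - 3 := by omega
                have := Nat.mul_le_mul h8 h8
                omega)]
              push_cast
              ring
      have t1 : c0 * ((k : ℝ) + 1) ≤ 2 * ((2 * n - 5 : ℕ) : ℝ) * c0 :=
        (mul_le_mul_of_nonneg_left hn1 hc0nonneg).trans_eq (by ring)
      have t2 : q2 * (k : ℝ) * (k : ℝ) ≤ (2 * ((n - 3 : ℕ) : ℝ) ^ 2 - 1) * q2 := by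
        rw [mul_assoc]
        exact (mul_le_mul_of_nonneg_left hn2 hq2.le).trans_eq (mul_comm _ _)
      linarith
    · -- n < 4 : then max 1 (n-2) = 1 and k = 0
      have hk1 : k < 1 := by rwa [max_eq_left (by omega : n - 2 ≤ 1)] at hk
      have hk0 : k = 0 := by omega
      subst hk0
      simp
  -- initial bound for cTilde2
  obtain ⟨hlm, hlmquad⟩ := KF.lamMin_facts hΓ0 hn0
  intro k hk
  have hpd := (main k).1
  have hdet := isUnit_iff_ne_zero.2 hpd.det_pos.ne'
  -- part (a)/(b)
  have hq1b : ((cTilde1 n q2 (Γpost 0)) : ℝ) = D⁻¹ := hcT1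
  have hub : ((D • 1 : Matrix (Fin n) (Fin n) ℝ) - Γpost k).PosSemidef := by
    rw [show (D • 1 : Matrix (Fin n) (Fin n) ℝ) - Γpost k = D • 1 - Γpost k by rfl]
    refine (KF.psd_sub_iff_quad hpd.isHermitian D).2 (fun x => ?_)
    exact (hquadbound k hk x).trans
      (mul_le_mul_of_nonneg_right (hDbound k hk) (by positivity))
  have hlow : ((Γpost k)⁻¹ - D⁻¹ • 1).PosSemidef := KF.inv_ge_of_le_smul hpd hDpos hub
  refine ⟨by rw [hcT1]; exact inv_pos.2 hDpos, by rw [loewnerLE, hcT1]; exact hlow, ?_⟩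
  -- part (c)
  rw [loewnerLE]
  set c2 := cTilde2 n q1 r1 (Γpost 0) with hc2
  have hc2a : (lamMin (Γpost 0))⁻¹ ≤ c2 := le_max_left _ _
  have hc2b : q1⁻¹ + r1⁻¹ ≤ c2 := le_max_right _ _
  match k with
  | 0 =>
    have h1 : ((Γpost 0) - (lamMin (Γpost 0)) • 1).PosSemidef :=
      (KF.psd_quad_sub_iff hΓ0.isHermitian _).2 hlmquad
    have h2 := KF.inv_le_of_smul_le hΓ0 hlm h1
    have heq : c2 • (1 : Matrix (Fin n) (Fin n) ℝ) - (Γpost 0)⁻¹ =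
        (c2 - (lamMin (Γpost 0))⁻¹) • (1 : Matrix (Fin n) (Fin n) ℝ) +
        ((lamMin (Γpost 0))⁻¹ • 1 - (Γpost 0)⁻¹) := by
      rw [sub_smul]; abel
    rw [heq]
    exact (KF.psd_smul_one (sub_nonneg.2 hc2a)).add h2
  | (j + 1) =>
    obtain ⟨hpd', hinv, _⟩ :=
      KF.kalman_step (hpriorpd j) (hRpd (j+1)) (K (j+1)) (hK j) (hpost j)
    have hprior_inv : ((q1⁻¹ • 1 : Matrix (Fin n) (Fin n) ℝ) - (Γprior (j+1))⁻¹).PosSemidef :=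
      KF.inv_le_of_smul_le (hpriorpd j) hq0 (hpriorlb j)
    -- bound on Hᵀ R⁻¹ H
    have hRk : (R (j+1)).PosDef := hRpd (j+1)
    have hRinvle : ((r1⁻¹ • 1 : Matrix (Fin (md (j+1))) (Fin (md (j+1))) ℝ)
        - (R (j+1))⁻¹).PosSemidef := by
      have h1 : ((R (j+1)) - r1 • 1).PosSemidef := ((hR (j+1)).1).posSemidef
      exact KF.inv_le_of_smul_le hRk hr0 h1
    have hHRH : ((r1⁻¹ • 1 : Matrix (Fin n) (Fin n) ℝ)
        - (H (j+1))ᵀ * (R (j+1))⁻¹ * H (j+1)).PosSemidef := by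
      have hherm : ((H (j+1))ᵀ * (R (j+1))⁻¹ * H (j+1)).IsHermitian := by
        have := hRk.inv.posSemidef.conjTranspose_mul_mul_same (H (j+1))
        rw [hct] at this
        exact this.isHermitian
      refine (KF.psd_sub_iff_quad hherm r1⁻¹).2 (fun x => ?_)
      have e1 : x ⬝ᵥ ((H (j+1))ᵀ * (R (j+1))⁻¹ * H (j+1)) *ᵥ x =
          (H (j+1) *ᵥ x) ⬝ᵥ (R (j+1))⁻¹ *ᵥ (H (j+1) *ᵥ x) := by
        rw [← mulVec_mulVec, ← mulVec_mulVec, dotProduct_mulVec]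
        congr 1
        rw [← mulVec_transpose, transpose_transpose]
      rw [e1]
      have e2 : (H (j+1) *ᵥ x) ⬝ᵥ (R (j+1))⁻¹ *ᵥ (H (j+1) *ᵥ x) ≤
          r1⁻¹ * ∑ p, ((H (j+1) *ᵥ x) p) ^ 2 := by
        have := (KF.psd_sub_iff_quad hRk.inv.isHermitian r1⁻¹).1 hRinvle (H (j+1) *ᵥ x)
        exact this
      have e3 : ∑ p, ((H (j+1) *ᵥ x) p) ^ 2 ≤ ∑ i, x i ^ 2 :=
        KF.standingH_quad ⟨(hH (j+1)).1, (hH (j+1)).2.1⟩ x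
      calc (H (j+1) *ᵥ x) ⬝ᵥ (R (j+1))⁻¹ *ᵥ (H (j+1) *ᵥ x)
          ≤ r1⁻¹ * ∑ p, ((H (j+1) *ᵥ x) p) ^ 2 := e2
        _ ≤ r1⁻¹ * ∑ i, x i ^ 2 :=
            mul_le_mul_of_nonneg_left e3 (inv_nonneg.2 hr0.le)
    have heq : c2 • (1 : Matrix (Fin n) (Fin n) ℝ) - (Γpost (j+1))⁻¹ =
        (c2 - (q1⁻¹ + r1⁻¹)) • (1 : Matrix (Fin n) (Fin n) ℝ) +
        ((q1⁻¹ • 1 - (Γprior (j+1))⁻¹) +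
         (r1⁻¹ • 1 - (H (j+1))ᵀ * (R (j+1))⁻¹ * H (j+1))) := by
      rw [hinv, sub_smul, add_smul]
      abel
    rw [heq]
    exact (KF.psd_smul_one (sub_nonneg.2 hc2b)).add (hprior_inv.add hHRH)


end
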